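/- arXiv:1809.01606 — 3 statements merged into one kernel-verified Lean document; each statement's English description precedes it below -/
import Mathlib

section
/- Suppose for each C̄ with C ⊆ C̄ ⊆ D, the function t ↦ pr(min_{i∈C̄} X_i > t, max_{j∈D\C̄} X_j ≤ t) is regularly varying at infinity with index −1/τ_{C̄}, and t ↦ pr(min_{i∈C} X_i > t) is regularly varying with index −1/η_C. Then η_C = max over C̄ ⊇ C of τ_{C̄}. -/
open Filter MeasureTheory

/-- `λ ∈ RV_α`: regular variation at infinity with index `α`. -/
def RegVary (f : ℝ → ℝ) (α : ℝ) : Prop :=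
  ∀ x : ℝ, 0 < x → Tendsto (fun t => f (t * x) / f t) atTop (nhds (x ^ α))

lemma regVary_eventually_pos {g : ℝ → ℝ} {α : ℝ} (h : RegVary g α) (hnn : ∀ t, 0 ≤ g t) :
    ∀ᶠ t in atTop, 0 < g t := by
  have h1 := h 1 one_pos
  rw [Real.one_rpow] at h1
  have h2 : ∀ᶠ t in atTop, (1:ℝ)/2 < g (t * 1) / g t :=
    h1.eventually (eventually_gt_nhds (by norm_num))
  filter_upwards [h2] with t ht
  rcases (hnn t).lt_or_eq with hp | hp
  · exact hp
  · exfalso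
    rw [mul_one, ← hp, div_zero] at ht
    norm_num at ht

/-- If `r` is eventually positive, eventually `≤ 1`, and `r(2t)/r(t) → L`, then `L ≤ 1`. -/
lemma ratio_le_one {r : ℝ → ℝ} {L : ℝ}
    (hpos : ∀ᶠ t in atTop, 0 < r t) (hb : ∀ᶠ t in atTop, r t ≤ 1)
    (hL : Tendsto (fun t => r (t * 2) / r t) atTop (nhds L)) : L ≤ 1 := by
  by_contra hcon
  push_neg at hcon
  set q : ℝ := (1 + L) / 2 with hq
  have hq1 : 1 < q := by rw [hq]; linarith
  have hqL : q < L := by rw [hq]; linarith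
  have hev : ∀ᶠ t in atTop, q ≤ r (t * 2) / r t :=
    hL.eventually (eventually_ge_nhds hqL)
  obtain ⟨T, hT⟩ := (hpos.and (hb.and hev)).exists_forall_of_atTop
  set T' : ℝ := max T 1 with hT'
  have hT'1 : 1 ≤ T' := le_max_right _ _
  have hT'T : T ≤ T' := le_max_left _ _
  have hstep : ∀ n : ℕ, q ^ n * r T' ≤ r (T' * 2 ^ n) := by
    intro n
    induction n with
    | zero => simp
    | succ n ih =>
      have hge : T ≤ T' * 2 ^ n := by
        have h2 : (1:ℝ) ≤ 2 ^ n := one_le_pow₀ (by norm_num)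
        nlinarith
      obtain ⟨hp, _, hr⟩ := hT _ hge
      have : q * r (T' * 2 ^ n) ≤ r (T' * 2 ^ n * 2) := (le_div_iff₀ hp).mp hr
      calc q ^ (n + 1) * r T' = q * (q ^ n * r T') := by ring
        _ ≤ q * r (T' * 2 ^ n) := by
            exact mul_le_mul_of_nonneg_left ih (by positivity)
        _ ≤ r (T' * 2 ^ n * 2) := this
        _ = r (T' * 2 ^ (n + 1)) := by ring_nf
  have hrT' : 0 < r T' := (hT T' hT'T).1
  obtain ⟨n, hn⟩ := pow_unbounded_of_one_lt (1 / r T') hq1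
  have hge : T ≤ T' * 2 ^ n := by
    have h2 : (1:ℝ) ≤ 2 ^ n := one_le_pow₀ (by norm_num)
    nlinarith
  have hle1 : r (T' * 2 ^ n) ≤ 1 := (hT _ hge).2.1
  have := hstep n
  have hgt : 1 < q ^ n * r T' := by
    rw [div_lt_iff₀ hrT'] at hn
    linarith [hn]
  linarith
/-- If `0 ≤ g ≤ f` pointwise and both are regularly varying, the index of `g`
is at most the index of `f`. -/
lemma index_le_of_le {g f : ℝ → ℝ} {β α : ℝ} (hg : RegVary g β) (hf : RegVary f α)
    (hgnn : ∀ t, 0 ≤ g t) (hle : ∀ t, g t ≤ f t) : β ≤ α := by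
  have hgp := regVary_eventually_pos hg hgnn
  have hfp := regVary_eventually_pos hf (fun t => (hgnn t).trans (hle t))
  have h2 : Tendsto (fun t : ℝ => t * 2) atTop atTop :=
    tendsto_id.atTop_mul_const (by norm_num)
  have hαpos : (0:ℝ) < (2:ℝ) ^ α := Real.rpow_pos_of_pos two_pos α
  have ht : Tendsto (fun t => (g (t * 2) / g t) / (f (t * 2) / f t)) atTop
      (nhds ((2:ℝ) ^ β / (2:ℝ) ^ α)) :=
    (hg 2 two_pos).div (hf 2 two_pos) (ne_of_gt hαpos)
  have heq : ∀ᶠ t in atTop,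
      (g (t * 2) / g t) / (f (t * 2) / f t) = (g (t*2) / f (t*2)) / (g t / f t) := by
    filter_upwards [hgp, hfp, h2.eventually hgp, h2.eventually hfp] with t h1 h3 h4 h5
    field_simp
  have hr : Tendsto (fun t => (fun s => g s / f s) (t * 2) / (fun s => g s / f s) t) atTop
      (nhds ((2:ℝ) ^ β / (2:ℝ) ^ α)) := ht.congr' heq
  have hrpos : ∀ᶠ t in atTop, 0 < g t / f t := by
    filter_upwards [hgp, hfp] with t h1 h3; exact div_pos h1 h3
  have hrle : ∀ᶠ t in atTop, g t / f t ≤ 1 := by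
    filter_upwards [hfp] with t h3; exact div_le_one_of_le₀ (hle t) h3.le
  have := ratio_le_one hrpos hrle hr
  have h2β : (2:ℝ) ^ β ≤ (2:ℝ) ^ α := by
    rw [div_le_one hαpos] at this; exact this
  exact (Real.rpow_le_rpow_left_iff (by norm_num : (1:ℝ) < 2)).mp h2β

lemma neg_one_div_le_neg_one_div {a b : ℝ} (ha : 0 < a) (hb : 0 < b) :
    -1 / a ≤ -1 / b ↔ a ≤ b := by
  rw [neg_div, neg_div, neg_le_neg_iff, one_div_le_one_div hb ha]

/-- If for each `C̄` with `C ⊆ C̄ ⊆ D` the function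
`t ↦ pr(min_{i ∈ C̄} X_i > t, max_{j ∈ D \ C̄} X_j ≤ t)` is regularly varying with index
`−1/τ_C̄`, and `t ↦ pr(min_{i ∈ C} X_i > t)` is regularly varying with index `−1/η_C`,
then `η_C = max_{C̄ ⊇ C} τ_C̄`. -/
theorem stmt_1 {Ω : Type*} [MeasurableSpace Ω] (μ : Measure Ω) [IsProbabilityMeasure μ]
    (d : ℕ) (X : Fin d → Ω → ℝ) (C : Finset (Fin d)) (hC : C.Nonempty)
    (τ : Finset (Fin d) → ℝ) (η : ℝ)
    (hτpos : ∀ Cb : Finset (Fin d), C ⊆ Cb → 0 < τ Cb) (hηpos : 0 < η)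
    (hτ : ∀ Cb : Finset (Fin d), C ⊆ Cb →
      RegVary (fun t => (μ {ω | (∀ i ∈ Cb, t < X i ω) ∧ ∀ j ∉ Cb, X j ω ≤ t}).toReal)
        (-1 / τ Cb))
    (hη : RegVary (fun t => (μ {ω | ∀ i ∈ C, t < X i ω}).toReal) (-1 / η)) :
    IsGreatest {x : ℝ | ∃ Cb : Finset (Fin d), C ⊆ Cb ∧ τ Cb = x} η := by
  classical
  set g : Finset (Fin d) → ℝ → ℝ :=
    fun Cb t => (μ {ω | (∀ i ∈ Cb, t < X i ω) ∧ ∀ j ∉ Cb, X j ω ≤ t}).toReal with hg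
  set f : ℝ → ℝ := fun t => (μ {ω | ∀ i ∈ C, t < X i ω}).toReal with hf
  have hgnn : ∀ Cb t, 0 ≤ g Cb t := fun _ _ => ENNReal.toReal_nonneg
  have hgf : ∀ Cb : Finset (Fin d), C ⊆ Cb → ∀ t, g Cb t ≤ f t := by
    intro Cb hCb t
    refine ENNReal.toReal_mono (measure_ne_top μ _) (measure_mono ?_)
    intro ω hω i hi
    exact hω.1 i (hCb hi)
  -- upper bound part
  have hupper : ∀ Cb : Finset (Fin d), C ⊆ Cb → τ Cb ≤ η := by
    intro Cb hCb
    have := index_le_of_le (hτ Cb hCb) hη (hgnn Cb) (hgf Cb hCb)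
    exact (neg_one_div_le_neg_one_div (hτpos Cb hCb) hηpos).mp this
  -- the collection of supersets of C
  set S : Finset (Finset (Fin d)) := Finset.univ.filter (fun Cb => C ⊆ Cb) with hS
  have hCS : C ∈ S := by simp [hS]
  obtain ⟨Cm, hCmS, hCmmax⟩ := S.exists_max_image τ ⟨C, hCS⟩
  have hCmsub : C ⊆ Cm := by simpa [hS] using hCmS
  -- subadditivity : f t ≤ ∑ Cb in S, g Cb t
  have hsubadd : ∀ t : ℝ, f t ≤ ∑ Cb ∈ S, g Cb t := by
    intro t
    have hincl : {ω | ∀ i ∈ C, t < X i ω} ⊆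
        ⋃ Cb ∈ S, {ω | (∀ i ∈ Cb, t < X i ω) ∧ ∀ j ∉ Cb, X j ω ≤ t} := by
      intro ω hω
      refine Set.mem_biUnion (show Finset.univ.filter (fun j => t < X j ω) ∈ S from ?_) ?_
      · simp only [hS, Finset.mem_filter, Finset.mem_univ, true_and]
        intro i hi
        simp only [Finset.mem_filter, Finset.mem_univ, true_and]
        exact hω i hi
      · constructor
        · intro i hi
          simpa using (Finset.mem_filter.mp hi).2
        · intro j hj
          by_contra hlt
          push_neg at hlt
          exact hj (Finset.mem_filter.mpr ⟨Finset.mem_univ _, hlt⟩)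
    have h1 : μ {ω | ∀ i ∈ C, t < X i ω} ≤
        ∑ Cb ∈ S, μ {ω | (∀ i ∈ Cb, t < X i ω) ∧ ∀ j ∉ Cb, X j ω ≤ t} :=
      (measure_mono hincl).trans (measure_biUnion_finset_le S _)
    have hfin : ∀ Cb ∈ S,
        μ {ω | (∀ i ∈ Cb, t < X i ω) ∧ ∀ j ∉ Cb, X j ω ≤ t} ≠ ⊤ :=
      fun Cb _ => measure_ne_top μ _
    calc f t ≤ (∑ Cb ∈ S, μ {ω | (∀ i ∈ Cb, t < X i ω) ∧ ∀ j ∉ Cb, X j ω ≤ t}).toReal :=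
          ENNReal.toReal_mono (by simp [ENNReal.sum_ne_top.mpr hfin]) h1
      _ = ∑ Cb ∈ S, g Cb t := ENNReal.toReal_sum hfin
  -- now show η ≤ τ Cm
  have hτm : η ≤ τ Cm := by
    by_contra hcon
    push_neg at hcon
    set a : ℝ := -1 / η with ha
    set b : ℝ := -1 / τ Cm with hb
    have hba : b < a := by
      rw [ha, hb, neg_div, neg_div, neg_lt_neg_iff]
      exact (one_div_lt_one_div hηpos (hτpos Cm hCmsub)).mpr hcon
    set c : ℝ := a - b with hc
    have hcpos : 0 < c := by simp [hc]; linarith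
    set N : ℝ := (S.card : ℝ) with hN
    have hNnn : 0 ≤ N := Nat.cast_nonneg _
    set x : ℝ := (4 * N + 1) ^ (1 / c) with hx
    have hbase : (1:ℝ) ≤ 4 * N + 1 := by linarith
    have hx1 : 1 ≤ x := by
      rw [hx]
      calc (1:ℝ) = 1 ^ (1/c) := (Real.one_rpow _).symm
        _ ≤ (4 * N + 1) ^ (1/c) :=
            Real.rpow_le_rpow zero_le_one hbase (by positivity)
    have hxpos : 0 < x := lt_of_lt_of_le one_pos hx1
    have hxc : x ^ c = 4 * N + 1 := by
      rw [hx, ← Real.rpow_mul (by linarith), one_div, inv_mul_cancel₀ (ne_of_gt hcpos),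
        Real.rpow_one]
    have hxβpos : (0:ℝ) < x ^ b := Real.rpow_pos_of_pos hxpos b
    -- each summand eventually bounded
    have hsummand : ∀ Cb ∈ S, ∀ᶠ t in atTop, g Cb (t * x) ≤ 2 * x ^ b * g Cb t := by
      intro Cb hCbS
      have hCbsub : C ⊆ Cb := by simpa [hS] using hCbS
      have hidx : -1 / τ Cb ≤ b :=
        (neg_one_div_le_neg_one_div (hτpos Cb hCbsub) (hτpos Cm hCmsub)).mpr
          (hCmmax Cb hCbS)
      have hlim := (hτ Cb hCbsub) x hxpos
      have hlt : x ^ (-1 / τ Cb) < 2 * x ^ b := by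
        have h1 : x ^ (-1 / τ Cb) ≤ x ^ b := Real.rpow_le_rpow_of_exponent_le hx1 hidx
        linarith
      have hev := hlim.eventually (eventually_lt_nhds hlt)
      have hgp := regVary_eventually_pos (hτ Cb hCbsub) (hgnn Cb)
      filter_upwards [hev, hgp] with t h1 h2
      have := (div_lt_iff₀ h2).mp h1
      linarith
    have hall : ∀ᶠ t in atTop, ∀ Cb ∈ S, g Cb (t * x) ≤ 2 * x ^ b * g Cb t :=
      (Filter.eventually_all_finset S).mpr hsummand
    have hfpos := regVary_eventually_pos hη
      (fun t => ENNReal.toReal_nonneg)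
    have hkey : ∀ᶠ t in atTop, f (t * x) / f t ≤ N * (2 * x ^ b) := by
      filter_upwards [hall, hfpos] with t h1 h2
      have hchain : f (t * x) ≤ N * (2 * x ^ b) * f t := by
        calc f (t * x) ≤ ∑ Cb ∈ S, g Cb (t * x) := hsubadd (t * x)
          _ ≤ ∑ Cb ∈ S, 2 * x ^ b * g Cb t := Finset.sum_le_sum h1
          _ ≤ ∑ Cb ∈ S, 2 * x ^ b * f t := by
              refine Finset.sum_le_sum ?_
              intro Cb hCbS
              have hCbsub : C ⊆ Cb := by simpa [hS] using hCbS
              exact mul_le_mul_of_nonneg_left (hgf Cb hCbsub t) (by positivity)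
          _ = N * (2 * x ^ b) * f t := by
              rw [Finset.sum_const, nsmul_eq_mul, hN]; ring
      exact (div_le_iff₀ h2).mpr (by linarith)
    have hlimle : x ^ a ≤ N * (2 * x ^ b) := le_of_tendsto (hη x hxpos) hkey
    have hfinal : x ^ c ≤ 2 * N := by
      rw [hc, Real.rpow_sub hxpos]
      rw [div_le_iff₀ hxβpos]
      calc x ^ a ≤ N * (2 * x ^ b) := hlimle
        _ = 2 * N * x ^ b := by ring
    rw [hxc] at hfinal
    linarith
  have hτmη : τ Cm = η := le_antisymm (hupper Cm hCmsub) hτm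
  exact ⟨⟨Cm, hCmsub, hτmη⟩, by rintro x ⟨Cb, hCb, rfl⟩; exact hupper Cb hCb⟩
end

section
/- Let (X_1,X_2,X_3) have the trivariate inverted logistic distribution with parameter α ∈ (0,1) as above, and let δ ∈ (0,1). Then as t → ∞, pr(X_1 > t, X_2 < t^δ, X_3 < t^δ) ∼ t^{−1} − 2 t^{−(1+δ^{1/α})^α} + t^{−(1+2δ^{1/α})^α} ∼ t^{−1}; in particular the probability is regularly varying with index −1, i.e. τ_1(δ) = 1. -/
open Filter MeasureTheory

noncomputable def Bfun (α δ t : ℝ) : ℝ :=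
  Real.exp (-((-Real.log (1 - Real.exp (-1 / t))) ^ (1 / α) +
    (-Real.log (1 - Real.exp (-1 / (t ^ δ / 2)))) ^ (1 / α)) ^ α)

lemma aux_one : Tendsto (fun t : ℝ => t * (1 - Real.exp (-1 / t))) atTop (nhds 1) := by
  have hd : HasDerivAt (fun u : ℝ => 1 - Real.exp (-u)) 1 0 := by
    have h0 : HasDerivAt Real.exp (Real.exp (-0)) (-0) := Real.hasDerivAt_exp (-0)
    have h := h0.comp 0 (hasDerivAt_neg 0)
    have := (hasDerivAt_const (0:ℝ) (1:ℝ)).sub h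
    norm_num at this
    refine this.congr_of_eventuallyEq (Filter.Eventually.of_forall fun u => ?_)
    simp
  have hs := hasDerivAt_iff_tendsto_slope.mp hd
  have hinv : Tendsto (fun t : ℝ => t⁻¹) atTop (nhdsWithin 0 {(0:ℝ)}ᶜ) :=
    tendsto_inv_atTop_nhdsGT_zero.mono_right
      (nhdsWithin_mono 0 (fun x hx => ne_of_gt hx))
  have hcomp := hs.comp hinv
  refine hcomp.congr' ?_
  filter_upwards [eventually_gt_atTop (0:ℝ)] with t ht
  have ht' : t ≠ 0 := ne_of_gt ht
  simp only [Function.comp, slope_def_field]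
  rw [div_eq_iff (by simpa using ht'), show (-1:ℝ)/t = -t⁻¹ by field_simp]
  have h1 : t * t⁻¹ = 1 := mul_inv_cancel₀ ht'
  simp only [neg_zero, Real.exp_zero, sub_zero]
  rw [mul_comm t (1 - Real.exp (-t⁻¹)), mul_assoc, h1, mul_one]
  ring
lemma aux_loglb {x : ℝ} (hx : 0 < x) : Real.log x ≤ -Real.log (1 - Real.exp (-1 / x)) := by
  have hneg : (-1 : ℝ) / x < 0 := by
    apply div_neg_of_neg_of_pos <;> [norm_num; exact hx]
  have h1 : Real.exp (-1 / x) < 1 := Real.exp_lt_one_iff.mpr hneg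
  have hpos : 0 < 1 - Real.exp (-1 / x) := by linarith
  have hle : 1 - Real.exp (-1 / x) ≤ 1 / x := by
    have := Real.add_one_le_exp (-1 / x)
    have hx' : (-1:ℝ)/x = -(1/x) := by ring
    linarith [this, hx'.symm ▸ this]
  have := Real.log_le_log hpos hle
  rw [Real.log_div one_ne_zero (ne_of_gt hx), Real.log_one] at this
  linarith

lemma aux_zero {α δ : ℝ} (hα : 0 < α) (hα1 : α < 1) (hδ : 0 < δ) (hδ1 : δ < 1) :
    Tendsto (fun t : ℝ => t * Bfun α δ t) atTop (nhds 0) := by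
  unfold Bfun
  set w : ℝ := (δ / 2) ^ (1 / α) with hw
  have hwpos : 0 < w := Real.rpow_pos_of_pos (by linarith) _
  set c : ℝ := (1 + w) ^ α with hc
  have hc1 : 1 < c := by
    rw [hc]
    exact (Real.one_lt_rpow_iff_of_pos (by linarith)).mpr (Or.inl ⟨by linarith, hα⟩)
  have hbound : ∀ᶠ t : ℝ in atTop,
      t * Real.exp (-((-Real.log (1 - Real.exp (-1 / t))) ^ (1 / α) +
      (-Real.log (1 - Real.exp (-1 / (t ^ δ / 2)))) ^ (1 / α)) ^ α) ≤ t ^ (1 - c) := by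
    filter_upwards [eventually_ge_atTop (1:ℝ),
      Real.tendsto_log_atTop.eventually_ge_atTop ((2/δ) * Real.log 2)] with t ht hlog
    have ht0 : 0 < t := lt_of_lt_of_le one_pos ht
    have hL0 : 0 ≤ Real.log t := Real.log_nonneg ht
    set L := Real.log t with hLdef
    -- positivity of s
    have hs0 : 0 < t ^ δ / 2 := by positivity
    -- lower bounds
    have hp : L ^ (1/α) ≤ (-Real.log (1 - Real.exp (-1 / t))) ^ (1 / α) :=
      Real.rpow_le_rpow hL0 (aux_loglb ht0) (by positivity)
    have hlogs : (δ/2) * L ≤ Real.log (t ^ δ / 2) := by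
      rw [Real.log_div (by positivity) two_ne_zero, Real.log_rpow ht0]
      have : (2/δ) * Real.log 2 ≤ L := hlog
      have hd2 : (δ/2) * ((2/δ) * Real.log 2) = Real.log 2 := by
        field_simp
      nlinarith [hd2]
    have hq : ((δ/2) * L) ^ (1/α) ≤ (-Real.log (1 - Real.exp (-1 / (t ^ δ / 2)))) ^ (1 / α) :=
      Real.rpow_le_rpow (by positivity) (le_trans hlogs (aux_loglb hs0)) (by positivity)
    have hqq : ((δ/2) * L) ^ (1/α) = w * L ^ (1/α) := Real.mul_rpow (by linarith) hL0
    have hsum : (1 + w) * L ^ (1/α) ≤ (-Real.log (1 - Real.exp (-1 / t))) ^ (1 / α) +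
        (-Real.log (1 - Real.exp (-1 / (t ^ δ / 2)))) ^ (1 / α) := by
      rw [add_mul, one_mul]
      exact add_le_add hp (hqq ▸ hq)
    have hexp : c * L ≤ ((-Real.log (1 - Real.exp (-1 / t))) ^ (1 / α) +
        (-Real.log (1 - Real.exp (-1 / (t ^ δ / 2)))) ^ (1 / α)) ^ α := by
      calc c * L = ((1 + w) * L ^ (1/α)) ^ α := by
            rw [Real.mul_rpow (by linarith) (by positivity), hc,
              ← Real.rpow_mul hL0, one_div, inv_mul_cancel₀ (ne_of_gt hα), Real.rpow_one]
        _ ≤ _ := Real.rpow_le_rpow (by positivity) hsum (le_of_lt hα)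
    have : Real.exp (-((-Real.log (1 - Real.exp (-1 / t))) ^ (1 / α) +
        (-Real.log (1 - Real.exp (-1 / (t ^ δ / 2)))) ^ (1 / α)) ^ α) ≤ Real.exp (-(c * L)) :=
      Real.exp_le_exp.mpr (by linarith)
    have hrw : Real.exp (-(c * L)) = t ^ (-c) := by
      rw [Real.rpow_def_of_pos ht0, ← hLdef]; ring_nf
    calc t * Real.exp (-((-Real.log (1 - Real.exp (-1 / t))) ^ (1 / α) +
          (-Real.log (1 - Real.exp (-1 / (t ^ δ / 2)))) ^ (1 / α)) ^ α)
        ≤ t * (t ^ (-c)) := by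
          exact mul_le_mul_of_nonneg_left (hrw ▸ this) (le_of_lt ht0)
      _ = t ^ (1 - c) := by
          rw [show t * t ^ (-c) = t ^ (1:ℝ) * t ^ (-c) by rw [Real.rpow_one],
            ← Real.rpow_add ht0]
          norm_num [sub_eq_add_neg]
  have hnonneg : ∀ᶠ t : ℝ in atTop,
      (0:ℝ) ≤ t * Real.exp (-((-Real.log (1 - Real.exp (-1 / t))) ^ (1 / α) +
      (-Real.log (1 - Real.exp (-1 / (t ^ δ / 2)))) ^ (1 / α)) ^ α) := by
    filter_upwards [eventually_ge_atTop (0:ℝ)] with t ht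
    positivity
  have hlim : Tendsto (fun t : ℝ => t ^ (1 - c)) atTop (nhds 0) := by
    have := tendsto_rpow_neg_atTop (by linarith : (0:ℝ) < c - 1)
    simpa [neg_sub] using this
  exact tendsto_of_tendsto_of_tendsto_of_le_of_le' tendsto_const_nhds hlim hnonneg hbound

section helpers
variable {Ω : Type*} [MeasurableSpace Ω]

theorem main_key (μ : Measure Ω) [IsProbabilityMeasure μ]
    (X₁ X₂ X₃ : Ω → ℝ) (α : ℝ) (hα : 0 < α) (hα1 : α < 1)
    (hmarg : ∀ x : ℝ, 0 < x →
      μ {ω | x < X₁ ω} = ENNReal.ofReal (1 - Real.exp (-1 / x)))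
    (hsurv2 : ∀ x y : ℝ, 0 < x → 0 < y →
      μ {ω | x < X₁ ω ∧ y < X₂ ω} =
        ENNReal.ofReal (Real.exp (-((-Real.log (1 - Real.exp (-1 / x))) ^ (1 / α) +
          (-Real.log (1 - Real.exp (-1 / y))) ^ (1 / α)) ^ α)))
    (hsurv2' : ∀ x z : ℝ, 0 < x → 0 < z →
      μ {ω | x < X₁ ω ∧ z < X₃ ω} =
        ENNReal.ofReal (Real.exp (-((-Real.log (1 - Real.exp (-1 / x))) ^ (1 / α) +
          (-Real.log (1 - Real.exp (-1 / z))) ^ (1 / α)) ^ α)))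
    (δ : ℝ) (hδ : 0 < δ) (hδ1 : δ < 1) :
    Tendsto (fun t : ℝ =>
        (μ {ω | t < X₁ ω ∧ X₂ ω < t ^ δ ∧ X₃ ω < t ^ δ}).toReal * t) atTop (nhds 1) := by
  have hhi : ∀ᶠ t : ℝ in atTop,
      (μ {ω | t < X₁ ω ∧ X₂ ω < t ^ δ ∧ X₃ ω < t ^ δ}).toReal * t
        ≤ t * (1 - Real.exp (-1 / t)) := by
    filter_upwards [eventually_gt_atTop (0:ℝ)] with t ht
    have hsub : {ω | t < X₁ ω ∧ X₂ ω < t ^ δ ∧ X₃ ω < t ^ δ} ⊆ {ω | t < X₁ ω} :=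
      fun ω hω => hω.1
    have h1 : (μ {ω | t < X₁ ω ∧ X₂ ω < t ^ δ ∧ X₃ ω < t ^ δ}).toReal
        ≤ 1 - Real.exp (-1 / t) := by
      have := measure_mono (μ := μ) hsub
      rw [hmarg t ht] at this
      have h2 := ENNReal.toReal_mono ENNReal.ofReal_ne_top this
      rwa [ENNReal.toReal_ofReal (by
        have : Real.exp (-1 / t) ≤ 1 := Real.exp_le_one_iff.mpr
          (le_of_lt (div_neg_of_neg_of_pos (by norm_num) ht))
        linarith)] at h2
    calc (μ {ω | t < X₁ ω ∧ X₂ ω < t ^ δ ∧ X₃ ω < t ^ δ}).toReal * t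
        ≤ (1 - Real.exp (-1 / t)) * t :=
          mul_le_mul_of_nonneg_right h1 (le_of_lt ht)
      _ = t * (1 - Real.exp (-1 / t)) := mul_comm _ _
  have hlo : ∀ᶠ t : ℝ in atTop,
      t * (1 - Real.exp (-1 / t)) - t * Bfun α δ t - t * Bfun α δ t
        ≤ (μ {ω | t < X₁ ω ∧ X₂ ω < t ^ δ ∧ X₃ ω < t ^ δ}).toReal * t := by
    filter_upwards [eventually_gt_atTop (0:ℝ)] with t ht
    have hs0 : 0 < t ^ δ / 2 := by positivity
    have hshalf : t ^ δ / 2 < t ^ δ := by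
      have : 0 < t ^ δ := Real.rpow_pos_of_pos ht δ
      linarith
    have hsub : {ω | t < X₁ ω} ⊆ {ω | t < X₁ ω ∧ X₂ ω < t ^ δ ∧ X₃ ω < t ^ δ} ∪
        {ω | t < X₁ ω ∧ t ^ δ / 2 < X₂ ω} ∪ {ω | t < X₁ ω ∧ t ^ δ / 2 < X₃ ω} := by
      intro ω hω
      by_cases h2 : X₂ ω < t ^ δ
      · by_cases h3 : X₃ ω < t ^ δ
        · exact Or.inl (Or.inl ⟨hω, h2, h3⟩)
        · exact Or.inr ⟨hω, lt_of_lt_of_le hshalf (le_of_not_gt h3)⟩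
      · exact Or.inl (Or.inr ⟨hω, lt_of_lt_of_le hshalf (le_of_not_gt h2)⟩)
    have hle : μ {ω | t < X₁ ω} ≤ μ {ω | t < X₁ ω ∧ X₂ ω < t ^ δ ∧ X₃ ω < t ^ δ} +
        μ {ω | t < X₁ ω ∧ t ^ δ / 2 < X₂ ω} + μ {ω | t < X₁ ω ∧ t ^ δ / 2 < X₃ ω} :=
      (measure_mono hsub).trans ((measure_union_le _ _).trans
        (add_le_add (measure_union_le _ _) le_rfl))
    have hfin : ∀ s : Set Ω, μ s ≠ ⊤ := fun s => measure_ne_top μ s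
    have hRfin : μ {ω | t < X₁ ω ∧ X₂ ω < t ^ δ ∧ X₃ ω < t ^ δ} +
        μ {ω | t < X₁ ω ∧ t ^ δ / 2 < X₂ ω} + μ {ω | t < X₁ ω ∧ t ^ δ / 2 < X₃ ω} ≠ ⊤ :=
      ENNReal.add_ne_top.mpr ⟨ENNReal.add_ne_top.mpr ⟨hfin _, hfin _⟩, hfin _⟩
    have hreal := ENNReal.toReal_mono hRfin hle
    rw [ENNReal.toReal_add (ENNReal.add_ne_top.mpr ⟨hfin _, hfin _⟩) (hfin _),
      ENNReal.toReal_add (hfin _) (hfin _)] at hreal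
    rw [hmarg t ht, hsurv2 t (t ^ δ / 2) ht hs0, hsurv2' t (t ^ δ / 2) ht hs0] at hreal
    rw [ENNReal.toReal_ofReal (by
        have : Real.exp (-1 / t) ≤ 1 := Real.exp_le_one_iff.mpr
          (le_of_lt (div_neg_of_neg_of_pos (by norm_num) ht))
        linarith),
      ENNReal.toReal_ofReal (Real.exp_nonneg _)] at hreal
    have hreal2 : 1 - Real.exp (-1 / t) ≤
        (μ {ω | t < X₁ ω ∧ X₂ ω < t ^ δ ∧ X₃ ω < t ^ δ}).toReal
          + Bfun α δ t + Bfun α δ t := hreal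
    have hmul := mul_le_mul_of_nonneg_left hreal2 (le_of_lt ht)
    have hring : t * ((μ {ω | t < X₁ ω ∧ X₂ ω < t ^ δ ∧ X₃ ω < t ^ δ}).toReal
        + Bfun α δ t + Bfun α δ t)
        = (μ {ω | t < X₁ ω ∧ X₂ ω < t ^ δ ∧ X₃ ω < t ^ δ}).toReal * t
          + t * Bfun α δ t + t * Bfun α δ t := by ring
    rw [hring] at hmul
    linarith
  have hlo_lim : Tendsto (fun t : ℝ =>
      t * (1 - Real.exp (-1 / t)) - t * Bfun α δ t - t * Bfun α δ t) atTop (nhds 1) := by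
    have h3 := (aux_one.sub (aux_zero hα hα1 hδ hδ1)).sub (aux_zero hα hα1 hδ hδ1)
    have h4 : (1:ℝ) - 0 - 0 = 1 := by norm_num
    rw [h4] at h3
    exact h3
  exact tendsto_of_tendsto_of_tendsto_of_le_of_le' hlo_lim aux_one hlo hhi
end helpers

/-- For the trivariate inverted logistic distribution with parameter `α ∈ (0,1)` and
`δ ∈ (0,1)`: `pr(X₁ > t, X₂ < t^δ, X₃ < t^δ) ∼ t^{−1}` as `t → ∞`; in particular this
probability is regularly varying with index `−1`, i.e. `τ₁(δ) = 1`. -/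
theorem stmt_9 {Ω : Type*} [MeasurableSpace Ω] (μ : Measure Ω) [IsProbabilityMeasure μ]
    (X₁ X₂ X₃ : Ω → ℝ) (α : ℝ) (hα : 0 < α) (hα1 : α < 1)
    (hmarg : ∀ x : ℝ, 0 < x →
      μ {ω | x < X₁ ω} = ENNReal.ofReal (1 - Real.exp (-1 / x)))
    (hsurv2 : ∀ x y : ℝ, 0 < x → 0 < y →
      μ {ω | x < X₁ ω ∧ y < X₂ ω} =
        ENNReal.ofReal (Real.exp (-((-Real.log (1 - Real.exp (-1 / x))) ^ (1 / α) +
          (-Real.log (1 - Real.exp (-1 / y))) ^ (1 / α)) ^ α)))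
    (hsurv2' : ∀ x z : ℝ, 0 < x → 0 < z →
      μ {ω | x < X₁ ω ∧ z < X₃ ω} =
        ENNReal.ofReal (Real.exp (-((-Real.log (1 - Real.exp (-1 / x))) ^ (1 / α) +
          (-Real.log (1 - Real.exp (-1 / z))) ^ (1 / α)) ^ α)))
    (hsurv3 : ∀ x y z : ℝ, 0 < x → 0 < y → 0 < z →
      μ {ω | x < X₁ ω ∧ y < X₂ ω ∧ z < X₃ ω} =
        ENNReal.ofReal (Real.exp (-((-Real.log (1 - Real.exp (-1 / x))) ^ (1 / α) +
          (-Real.log (1 - Real.exp (-1 / y))) ^ (1 / α) +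
          (-Real.log (1 - Real.exp (-1 / z))) ^ (1 / α)) ^ α)))
    (δ : ℝ) (hδ : 0 < δ) (hδ1 : δ < 1) :
    Tendsto (fun t : ℝ =>
        (μ {ω | t < X₁ ω ∧ X₂ ω < t ^ δ ∧ X₃ ω < t ^ δ}).toReal / t ^ (-1 : ℝ))
      atTop (nhds 1) ∧
    RegVary (fun t => (μ {ω | t < X₁ ω ∧ X₂ ω < t ^ δ ∧ X₃ ω < t ^ δ}).toReal) (-1) := by
  have key := main_key μ X₁ X₂ X₃ α hα hα1 hmarg hsurv2 hsurv2' δ hδ hδ1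
  set f : ℝ → ℝ := fun t => (μ {ω | t < X₁ ω ∧ X₂ ω < t ^ δ ∧ X₃ ω < t ^ δ}).toReal with hf
  constructor
  · refine key.congr' ?_
    filter_upwards [eventually_gt_atTop (0:ℝ)] with t ht
    have h1 : (t:ℝ) ^ (-1 : ℝ) = t⁻¹ := by
      rw [show (-1:ℝ) = ((-1:ℤ):ℝ) by norm_num, Real.rpow_intCast, zpow_neg_one]
    rw [h1, div_eq_mul_inv, inv_inv]
  · intro x hx
    have hx' : x ≠ 0 := ne_of_gt hx
    have hxinv : x ^ (-1 : ℝ) = x⁻¹ := by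
      rw [show (-1:ℝ) = ((-1:ℤ):ℝ) by norm_num, Real.rpow_intCast, zpow_neg_one]
    have key2 : Tendsto (fun t : ℝ => f (t * x) * (t * x)) atTop (nhds 1) :=
      key.comp (Tendsto.atTop_mul_const hx tendsto_id)
    have hq : Tendsto (fun t : ℝ => f (t * x) * (t * x) / (f t * t) * x⁻¹) atTop
        (nhds (1 / 1 * x⁻¹)) := (key2.div key one_ne_zero).mul_const _
    rw [show (1:ℝ)/1 * x⁻¹ = x⁻¹ by norm_num] at hq
    rw [hxinv]
    refine hq.congr' ?_
    filter_upwards [eventually_gt_atTop (0:ℝ)] with t ht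
    have ht' : t ≠ 0 := ne_of_gt ht
    rw [mul_div_mul_comm, mul_div_cancel_left₀ x ht', mul_inv_cancel_right₀ hx']
end

section
/- In the inequality above for a 3×3 positive definite correlation matrix, equivalently: the quantity η_{123} := (1_3^T Σ^{−1} 1_3)^{−1} satisfies η_{123} ≤ η_{12} := (1+ρ_{12})/2, with equality if and only if 1+ρ_{12} = ρ_{13}+ρ_{23}; and by symmetry η_{123} ≤ min_{i<j} (1+ρ_{ij})/2. -/
open Matrix

/-- For a 3×3 positive definite correlation matrix, `η₁₂₃ := (1₃ᵀ Σ⁻¹ 1₃)⁻¹` satisfies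
`η₁₂₃ ≤ η₁₂ := (1+ρ₁₂)/2`, with equality iff `1+ρ₁₂ = ρ₁₃+ρ₂₃`; and by symmetry
`η₁₂₃ ≤ min_{i<j} (1+ρᵢⱼ)/2`. -/
theorem stmt_11 (ρ₁₂ ρ₁₃ ρ₂₃ : ℝ)
    (S : Matrix (Fin 3) (Fin 3) ℝ)
    (hS : S = !![1, ρ₁₂, ρ₁₃; ρ₁₂, 1, ρ₂₃; ρ₁₃, ρ₂₃, 1])
    (hpos : S.PosDef)
    (η₁₂₃ : ℝ) (hη : η₁₂₃ = ((fun _ : Fin 3 => (1 : ℝ)) ⬝ᵥ (S⁻¹ *ᵥ fun _ => 1))⁻¹) :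
    η₁₂₃ ≤ (1 + ρ₁₂) / 2 ∧
    (η₁₂₃ = (1 + ρ₁₂) / 2 ↔ 1 + ρ₁₂ = ρ₁₃ + ρ₂₃) ∧
    η₁₂₃ ≤ min (min ((1 + ρ₁₂) / 2) ((1 + ρ₁₃) / 2)) ((1 + ρ₂₃) / 2) := by
  have key : ∀ x : Fin 3 → ℝ, x ≠ 0 → 0 < x ⬝ᵥ (S *ᵥ x) := fun x hx => by
    simpa using hpos.dotProduct_mulVec_pos hx
  have h12 : ρ₁₂ < 1 := by
    have := key ![1, -1, 0] (by intro h; have := congrFun h 0; simpa using this)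
    rw [hS] at this
    simp [dotProduct, mulVec, Fin.sum_univ_three] at this
    linarith
  have h13 : ρ₁₃ < 1 := by
    have := key ![1, 0, -1] (by intro h; have := congrFun h 0; simpa using this)
    rw [hS] at this
    simp [dotProduct, mulVec, Fin.sum_univ_three] at this
    linarith
  have h23 : ρ₂₃ < 1 := by
    have := key ![0, 1, -1] (by intro h; have := congrFun h 1; simpa using this)
    rw [hS] at this
    simp [dotProduct, mulVec, Fin.sum_univ_three] at this
    linarith
  have hq : (0:ℝ) < (fun _ : Fin 3 => (1 : ℝ)) ⬝ᵥ (S⁻¹ *ᵥ fun _ => 1) := by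
    have hi := hpos.inv
    have := hi.dotProduct_mulVec_pos (show (fun _ : Fin 3 => (1 : ℝ)) ≠ 0 by intro h; have := congrFun h 0; simpa using this)
    simpa using this
  set d : ℝ := 1 + 2*ρ₁₂*ρ₁₃*ρ₂₃ - ρ₁₂^2 - ρ₁₃^2 - ρ₂₃^2 with hdd
  set N : ℝ := (1 - ρ₂₃^2) + (1-ρ₁₃^2) + (1-ρ₁₂^2)
        + 2*(ρ₁₃*ρ₂₃ - ρ₁₂) + 2*(ρ₁₂*ρ₂₃ - ρ₁₃) + 2*(ρ₁₂*ρ₁₃ - ρ₂₃) with hN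
  have hdet : S.det = d := by
    rw [hS, hdd]; simp [Matrix.det_fin_three]; ring
  have hqv : (fun _ : Fin 3 => (1 : ℝ)) ⬝ᵥ (S⁻¹ *ᵥ fun _ => 1) = d⁻¹ * N := by
    rw [Matrix.inv_def, hS, hdd, hN]
    simp [Matrix.adjugate_fin_three, Matrix.det_fin_three, dotProduct, mulVec,
      Fin.sum_univ_three]
    ring
  have hD : 0 < d := hdet ▸ hpos.det_pos
  have hNpos : 0 < N := by
    rw [hqv] at hq
    nlinarith [inv_pos.mpr hD]
  have hηv : η₁₂₃ = d / N := by
    rw [hη, hqv, mul_inv, inv_inv, div_eq_mul_inv]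
  have le12 : η₁₂₃ ≤ (1 + ρ₁₂) / 2 := by
    rw [hηv, div_le_div_iff₀ hNpos two_pos, hdd, hN]
    nlinarith [mul_nonneg (by linarith : (0:ℝ) ≤ 1 - ρ₁₂) (sq_nonneg (1 + ρ₁₂ - ρ₁₃ - ρ₂₃))]
  refine ⟨le12, ⟨?_, ?_⟩, ?_⟩
  · intro h
    rw [hηv, div_eq_div_iff hNpos.ne' two_ne_zero] at h
    rw [hdd, hN] at h
    have h3 : (1 - ρ₁₂) * (1 + ρ₁₂ - ρ₁₃ - ρ₂₃)^2 = 0 := by linear_combination -h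
    rcases mul_eq_zero.mp h3 with h4 | h4
    · linarith
    · have := pow_eq_zero_iff (two_ne_zero) |>.mp h4
      linarith
  · intro h
    rw [hηv, div_eq_div_iff hNpos.ne' two_ne_zero, hdd, hN]
    linear_combination (-(1 - ρ₁₂) * (1 + ρ₁₂ - ρ₁₃ - ρ₂₃)) * h
  · refine le_min (le_min le12 ?_) ?_
    · rw [hηv, div_le_div_iff₀ hNpos two_pos, hdd, hN]
      nlinarith [mul_nonneg (by linarith : (0:ℝ) ≤ 1 - ρ₁₃) (sq_nonneg (1 + ρ₁₃ - ρ₁₂ - ρ₂₃))]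
    · rw [hηv, div_le_div_iff₀ hNpos two_pos, hdd, hN]
      nlinarith [mul_nonneg (by linarith : (0:ℝ) ≤ 1 - ρ₂₃) (sq_nonneg (1 + ρ₂₃ - ρ₁₂ - ρ₁₃))]
end
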